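/- Let Σ be a 2-chromatic signed simple graph (χ(Σ) = 2). Then M(Σ) = m(Σ) = 0 if and only if Σ contains at least one positive edge. -/

import Mathlib

/-- A signed simple graph: two edge-disjoint simple graphs on the same vertex set,
the positive edges and the negative edges. -/
structure SignedGraph (V : Type*) where
  pos : SimpleGraph V
  neg : SimpleGraph V
  disjoint : ∀ a b : V, ¬ (pos.Adj a b ∧ neg.Adj a b)

/-- The color set of size `n`: `{±1, …, ±k}` if `n = 2k`, and `{0, ±1, …, ±k}` if `n = 2k+1`. -/
noncomputable def signedColorSet (n : ℕ) : Finset ℤ :=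
  if Even n then (Finset.Icc (-((n / 2 : ℕ) : ℤ)) ((n / 2 : ℕ) : ℤ)).erase 0
  else Finset.Icc (-((n / 2 : ℕ) : ℤ)) ((n / 2 : ℕ) : ℤ)

/-- A proper coloration of a signed graph using the color set of size `n`. -/
def IsProperColoration {V : Type*} (S : SignedGraph V) (n : ℕ) (κ : V → ℤ) : Prop :=
  (∀ v, κ v ∈ signedColorSet n) ∧
  (∀ a b, S.pos.Adj a b → κ a ≠ κ b) ∧
  (∀ a b, S.neg.Adj a b → κ a ≠ -κ b)

/-- The chromatic number: the least size of a color set admitting a proper coloration. -/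
noncomputable def sChromaticNumber {V : Type*} (S : SignedGraph V) : ℕ :=
  sInf {n : ℕ | ∃ κ : V → ℤ, IsProperColoration S n κ}

/-- A minimal coloration: a proper coloration using the color set of size `χ(Σ)`. -/
def IsMinimalColoration {V : Type*} (S : SignedGraph V) (κ : V → ℤ) : Prop :=
  IsProperColoration S (sChromaticNumber S) κ

/-- The deficiency of a coloration: the number of unused colors from the color set of size `n`. -/
noncomputable def sDeficiency {V : Type*} [Fintype V] (n : ℕ) (κ : V → ℤ) : ℕ :=
  (signedColorSet n \ Finset.image κ Finset.univ).card

/-- Maximum deficiency over minimal colorations. -/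
noncomputable def maxDef {V : Type*} [Fintype V] (S : SignedGraph V) : ℕ :=
  sSup {d : ℕ | ∃ κ : V → ℤ, IsMinimalColoration S κ ∧ sDeficiency (sChromaticNumber S) κ = d}

/-- Minimum deficiency over minimal colorations. -/
noncomputable def minDef {V : Type*} [Fintype V] (S : SignedGraph V) : ℕ :=
  sInf {d : ℕ | ∃ κ : V → ℤ, IsMinimalColoration S κ ∧ sDeficiency (sChromaticNumber S) κ = d}

/-- A stable cover of the positive edges: a vertex cover of `E⁺` that is stable in `Σ`. -/
def IsStableCover {V : Type*} (S : SignedGraph V) (T : Set V) : Prop :=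
  (∀ a b, S.pos.Adj a b → a ∈ T ∨ b ∈ T) ∧
  (∀ a ∈ T, ∀ b ∈ T, ¬ S.pos.Adj a b ∧ ¬ S.neg.Adj a b)

/-- An edge `ab` has exactly one endpoint in `A`. -/
def crossing {V : Type*} (A : Set V) (a b : V) : Prop := ¬ ((a ∈ A) ↔ (b ∈ A))

/-- Switching a signed graph at a vertex set `A`: the sign of every edge with exactly one
endpoint in `A` is negated. -/
def SignedGraph.switch {V : Type*} (S : SignedGraph V) (A : Set V) : SignedGraph V where
  pos :=
    { Adj := fun a b => (S.pos.Adj a b ∧ ¬ crossing A a b) ∨ (S.neg.Adj a b ∧ crossing A a b)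
      symm := by
        constructor
        intro a b h
        unfold crossing at *
        rcases h with ⟨h1, h2⟩ | ⟨h1, h2⟩
        · exact Or.inl ⟨S.pos.adj_symm h1, by tauto⟩
        · exact Or.inr ⟨S.neg.adj_symm h1, by tauto⟩
      loopless := by
        constructor
        intro a h
        rcases h with ⟨h1, _⟩ | ⟨_, h2⟩
        · exact S.pos.loopless.irrefl a h1
        · exact h2 Iff.rfl }
  neg :=
    { Adj := fun a b => (S.neg.Adj a b ∧ ¬ crossing A a b) ∨ (S.pos.Adj a b ∧ crossing A a b)
      symm := by
        constructor
        intro a b h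
        unfold crossing at *
        rcases h with ⟨h1, h2⟩ | ⟨h1, h2⟩
        · exact Or.inl ⟨S.neg.adj_symm h1, by tauto⟩
        · exact Or.inr ⟨S.pos.adj_symm h1, by tauto⟩
      loopless := by
        constructor
        intro a h
        rcases h with ⟨h1, _⟩ | ⟨_, h2⟩
        · exact S.neg.loopless.irrefl a h1
        · exact h2 Iff.rfl }
  disjoint := by
    intro a b h
    have := S.disjoint a b
    tauto

/-- General proper coloration with an arbitrary color set `C ⊆ ℤ`. -/
def IsProperWith {V : Type*} (S : SignedGraph V) (C : Set ℤ) (κ : V → ℤ) : Prop :=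
  (∀ v, κ v ∈ C) ∧
  (∀ a b, S.pos.Adj a b → κ a ≠ κ b) ∧
  (∀ a b, S.neg.Adj a b → κ a ≠ -κ b)

open Classical in
/-- The coloration switching equivalent to `κ` via `A`: negate the colors on `A`. -/
noncomputable def switchColor {V : Type*} (A : Set V) (κ : V → ℤ) : V → ℤ :=
  fun v => if v ∈ A then -κ v else κ v

/-- The adjacency of the forcing graph `F(Σ)` for the matching `m`:
a directed edge from `x` to `y` whenever `x ȳ` is a negative edge. -/
def ForcingAdj {V : Type*} (S : SignedGraph V) (m : V → V) (x y : V) : Prop :=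
  S.neg.Adj x (m y)


/-- For a 2-chromatic signed simple graph,
`M(Σ) = m(Σ) = 0` iff `Σ` contains at least one positive edge. -/
theorem two_chromatic_def_zero {V : Type*} [Fintype V] (S : SignedGraph V)
    (h : sChromaticNumber S = 2) :
    (maxDef S = 0 ∧ minDef S = 0) ↔ (∃ a b : V, S.pos.Adj a b) := by

  have hcs : signedColorSet 2 = {-1, 1} := by decide
  constructor
  · rintro ⟨hM, _⟩
    by_contra hno
    push_neg at hno
    have hV : Nonempty V := by
      by_contra hv
      rw [not_nonempty_iff] at hv
      have h0 : 0 ∈ {n : ℕ | ∃ κ : V → ℤ, IsProperColoration S n κ} :=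
        ⟨fun _ => 0, fun v => (hv.elim v), fun a _ _ => (hv.elim a), fun a _ _ => (hv.elim a)⟩
      have hle := Nat.sInf_le h0
      unfold sChromaticNumber at h
      omega
    have hκ : IsMinimalColoration S (fun _ => 1) := by
      unfold IsMinimalColoration
      rw [h]
      refine ⟨fun v => ?_, fun a b hab => absurd hab (hno a b), fun a b _ => by norm_num⟩
      rw [hcs]; norm_num
    have himg : Finset.image (fun _ : V => (1:ℤ)) Finset.univ = {1} := by
      apply Finset.Subset.antisymm
      · intro x hx
        simp only [Finset.mem_image] at hx
        obtain ⟨v, _, rfl⟩ := hx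
        simp
      · intro x hx
        simp only [Finset.mem_singleton] at hx
        subst hx
        obtain ⟨v⟩ := hV
        exact Finset.mem_image_of_mem _ (Finset.mem_univ v)
    have hdef : sDeficiency 2 (fun _ : V => (1:ℤ)) = 1 := by
      unfold sDeficiency
      rw [hcs, himg]
      decide
    have h1 : 1 ∈ {d : ℕ | ∃ κ : V → ℤ,
        IsMinimalColoration S κ ∧ sDeficiency (sChromaticNumber S) κ = d} :=
      ⟨fun _ => 1, hκ, by rw [h]; exact hdef⟩
    have hbdd : BddAbove {d : ℕ | ∃ κ : V → ℤ,
        IsMinimalColoration S κ ∧ sDeficiency (sChromaticNumber S) κ = d} := by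
      refine ⟨2, ?_⟩
      rintro d ⟨κ, _, rfl⟩
      calc sDeficiency (sChromaticNumber S) κ
          ≤ (signedColorSet (sChromaticNumber S)).card := Finset.card_le_card (Finset.sdiff_subset)
        _ = 2 := by rw [h, hcs]; decide
    have hle := le_csSup hbdd h1
    unfold maxDef at hM
    omega
  · rintro ⟨a, b, hab⟩
    have hne : {n : ℕ | ∃ κ : V → ℤ, IsProperColoration S n κ}.Nonempty := by
      by_contra hne
      rw [Set.not_nonempty_iff_eq_empty] at hne
      unfold sChromaticNumber at h
      rw [hne] at h
      simp at h
    obtain ⟨κ₀, hκ₀⟩ : ∃ κ : V → ℤ, IsProperColoration S (sChromaticNumber S) κ :=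
      Nat.sInf_mem hne
    have hall : ∀ κ : V → ℤ, IsMinimalColoration S κ →
        sDeficiency (sChromaticNumber S) κ = 0 := by
      intro κ hκ
      unfold IsMinimalColoration at hκ
      rw [h] at hκ
      obtain ⟨hmem, hpos, _⟩ := hκ
      have ha := hmem a
      have hb := hmem b
      have hne' := hpos a b hab
      unfold sDeficiency
      rw [h]
      rw [Finset.card_eq_zero, Finset.sdiff_eq_empty_iff_subset]
      intro x hx
      rw [hcs] at ha hb hx
      simp only [Finset.mem_insert, Finset.mem_singleton] at ha hb hx
      have hxa : x = κ a ∨ x = κ b := by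
        rcases ha with ha | ha <;> rcases hb with hb | hb <;>
          rcases hx with hx | hx <;> omega
      rcases hxa with rfl | rfl <;>
        exact Finset.mem_image_of_mem _ (Finset.mem_univ _)
    have hD : {d : ℕ | ∃ κ : V → ℤ,
        IsMinimalColoration S κ ∧ sDeficiency (sChromaticNumber S) κ = d} = {0} := by
      ext d
      simp only [Set.mem_setOf_eq, Set.mem_singleton_iff]
      constructor
      · rintro ⟨κ, hκ, rfl⟩; exact hall κ hκ
      · rintro rfl; exact ⟨κ₀, hκ₀, hall κ₀ hκ₀⟩
    constructor
    · unfold maxDef; rw [hD]; exact csSup_singleton 0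
    · unfold minDef; rw [hD]; exact csInf_singleton 0
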